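/- Let C ⊊ X be a closed convex set in a finite-dimensional normed space, and let v ≠ 0 be an asymptotic direction of C. Then v belongs to the recession cone of C. -/

import Mathlib

/-- `v` is an asymptotic direction of the closed convex set `C`. -/
def IsAsymptoticDir {X : Type*} [NormedAddCommGroup X] [NormedSpace ℝ X]
    (C : Set X) (v : X) : Prop :=
  v ≠ 0 ∧ ∃ x₀ : X,
    (∀ t : ℝ, 0 ≤ t → x₀ + t • v ∉ interior C) ∧
    Filter.Tendsto (fun t : ℝ => Metric.infDist (x₀ + t • v) C) Filter.atTop (nhds 0)

theorem stmt_1 {X : Type*} [NormedAddCommGroup X] [NormedSpace ℝ X]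
    [FiniteDimensional ℝ X]
    (C : Set X) (hclosed : IsClosed C) (hconv : Convex ℝ C) (hne : C ≠ Set.univ)
    (hint : (interior C).Nonempty)
    (v : X) (hv : IsAsymptoticDir C v) :
    {x : X | ∃ c ∈ C, ∃ t : ℝ, 0 ≤ t ∧ x = c + t • v} = C := by
  obtain ⟨hv0, x₀, hmiss, hlim⟩ := hv
  ext x
  constructor
  · rintro ⟨c, hc, s, hs, rfl⟩
    have hCne : C.Nonempty := ⟨c, hc⟩
    obtain ⟨T, hT⟩ := (Filter.eventually_atTop).1 (hlim.eventually (gt_mem_nhds one_pos))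
    set t : ℕ → ℝ := fun n => max T s + 1 + n with htdef
    have htT : ∀ n, T ≤ t n := fun n => by
      have : T ≤ max T s := le_max_left _ _
      have hn : (0:ℝ) ≤ n := Nat.cast_nonneg n
      simp only [htdef]; linarith
    have hts : ∀ n, s ≤ t n := fun n => by
      have : s ≤ max T s := le_max_right _ _
      have hn : (0:ℝ) ≤ n := Nat.cast_nonneg n
      simp only [htdef]; linarith
    have htp : ∀ n, 0 < t n := fun n => by
      have : (0:ℝ) ≤ max T s := le_trans hs (le_max_right _ _)
      have hn : (0:ℝ) ≤ n := Nat.cast_nonneg n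
      simp only [htdef]; linarith
    have hy : ∀ n : ℕ, ∃ y ∈ C, dist (x₀ + t n • v) y < 1 := fun n =>
      (Metric.infDist_lt_iff hCne).1 (hT _ (htT n))
    choose y hyC hyd using hy
    set z : ℕ → X := fun n => c + (s / t n) • (y n - c) with hzdef
    have hzC : ∀ n, z n ∈ C := by
      intro n
      have h0 : 0 ≤ s / t n := div_nonneg hs (htp n).le
      have h1 : s / t n ≤ 1 := (div_le_one (htp n)).2 (hts n)
      have := hconv hc (hyC n) (by linarith : (0:ℝ) ≤ 1 - s / t n) h0 (by ring)
      convert this using 1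
      simp only [hzdef]
      module
    have hzlim : Filter.Tendsto z Filter.atTop (nhds (c + s • v)) := by
      rw [tendsto_iff_norm_sub_tendsto_zero]
      have hbound : ∀ n, ‖z n - (c + s • v)‖ ≤ (s / t n) * (1 + ‖x₀ - c‖) := by
        intro n
        have hne' : t n ≠ 0 := (htp n).ne'
        have heq : z n - (c + s • v) = (s / t n) • (y n - (x₀ + t n • v) + (x₀ - c)) := by
          simp only [hzdef]
          match_scalars <;> field_simp <;> ring
        rw [heq, norm_smul]
        have h1 : ‖y n - (x₀ + t n • v) + (x₀ - c)‖ ≤ 1 + ‖x₀ - c‖ := by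
          refine le_trans (norm_add_le _ _) ?_
          have : ‖y n - (x₀ + t n • v)‖ = dist (x₀ + t n • v) (y n) := by
            rw [dist_comm, dist_eq_norm]
          rw [this]
          linarith [hyd n]
        have h0 : ‖(s / t n : ℝ)‖ = s / t n := by
          rw [Real.norm_eq_abs, abs_of_nonneg (div_nonneg hs (htp n).le)]
        rw [h0]
        exact mul_le_mul_of_nonneg_left h1 (div_nonneg hs (htp n).le)
      refine squeeze_zero (fun n => norm_nonneg _) hbound ?_
      have hta : Filter.Tendsto t Filter.atTop Filter.atTop := by
        simp only [htdef]
        exact Filter.tendsto_atTop_add_const_left _ _ tendsto_natCast_atTop_atTop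
      have : Filter.Tendsto (fun n => s / t n) Filter.atTop (nhds 0) :=
        Filter.Tendsto.div_atTop tendsto_const_nhds hta
      have := this.mul_const (1 + ‖x₀ - c‖)
      simpa using this
    exact hclosed.mem_of_tendsto hzlim (Filter.Eventually.of_forall hzC)
  · intro hx
    exact ⟨x, hx, 0, le_refl 0, by simp⟩
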